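/- Let k be a field, let a, b, c, λ ∈ k, let v = (a, b, c, 1) ∈ k⁴, and let M be the 4×4 matrix λ·D + v·vᵀ, where D is the diagonal matrix diag(1,1,1,0) and v·vᵀ denotes the outer product (so M has entries M₀₀ = a²+λ, M₀₁ = ab, M₀₃ = a, M₃₃ = 1, etc.). Then the rank of M is never equal to 3; more precisely, M has rank 4 when λ ≠ 0 and rank 1 when λ = 0. -/

import Mathlib

/-- The pencil spanned by the smooth cone diag(1,1,1,0) and a doubled plane
v·vᵀ (with v = (a,b,c,1), not through the vertex) contains no rank-3 matrix:
λ·D + v·vᵀ has rank 4 when λ ≠ 0 and rank 1 when λ = 0. -/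
theorem pencil_cone_doubled_plane_rank {k : Type*} [Field k]
    (a b c lam : k)
    (v : Fin 4 → k) (hv : v = ![a, b, c, 1])
    (M : Matrix (Fin 4) (Fin 4) k)
    (hM : M = lam • Matrix.diagonal ![1, 1, 1, 0] + Matrix.vecMulVec v v) :
    M.rank ≠ 3 ∧ (lam ≠ 0 → M.rank = 4) ∧ (lam = 0 → M.rank = 1) := by
  have hdet : M.det = lam ^ 3 := by
    subst hv hM
    rw [show lam • Matrix.diagonal ![1, 1, 1, 0] + Matrix.vecMulVec ![a,b,c,1] ![a,b,c,1]
        = !![a*a+lam, a*b, a*c, a; b*a, b*b+lam, b*c, b; c*a, c*b, c*c+lam, c; a, b, c, 1] by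
      ext i j
      fin_cases i <;> fin_cases j <;>
        simp [Matrix.vecMulVec, Matrix.diagonal, add_comm]]
    simp [Matrix.det_succ_row_zero, Fin.sum_univ_succ, Matrix.det_fin_three,
      show (Fin.succAbove 1 2 : Fin 4) = 3 from rfl, show (Fin.succAbove 2 2 : Fin 4) = 3 from rfl,
      show (Fin.succAbove 3 2 : Fin 4) = 2 from rfl]
    ring
  have h4 : lam ≠ 0 → M.rank = 4 := by
    intro h
    have hu : IsUnit M := by
      rw [Matrix.isUnit_iff_isUnit_det, hdet]
      exact isUnit_iff_ne_zero.mpr (pow_ne_zero _ h)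
    simpa using M.rank_of_isUnit hu
  have h1 : lam = 0 → M.rank = 1 := by
    intro h
    subst h
    rw [zero_smul, zero_add] at hM
    have hle : M.rank ≤ 1 := by
      rw [hM, Matrix.vecMulVec_eq Unit]
      refine le_trans (Matrix.rank_mul_le_left _ _) ?_
      simpa using Matrix.rank_le_card_width (Matrix.replicateCol Unit v)
    have hne : M.rank ≠ 0 := by
      intro h0
      have hbot : LinearMap.range M.mulVecLin = ⊥ :=
        Submodule.finrank_eq_zero.mp h0
      have hzero : M.mulVecLin = 0 := LinearMap.range_eq_bot.mp hbot
      have : M.mulVec (Pi.single 3 1) = 0 := by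
        rw [← Matrix.mulVecLin_apply, hzero]; rfl
      have h33 : M.mulVec (Pi.single 3 1) 3 = 1 := by
        simp [Matrix.mulVec_single, hM, hv, Matrix.vecMulVec]
      rw [this] at h33
      exact one_ne_zero h33.symm
    omega
  refine ⟨?_, h4, h1⟩
  intro h3
  by_cases h : lam = 0
  · rw [h1 h] at h3; omega
  · rw [h4 h] at h3; omega
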